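/- Let F be an algebraically closed field of characteristic ≠ 2, A a finite-dimensional F-algebra, and y ∈ A invertible. Then the set y·F[y²] (elements of the form y·p(y²) for p ∈ F[t]) contains an element u with u² = 1. -/

import Mathlib

open Polynomial

private lemma commute_aeval_aux {R A : Type*} [CommSemiring R] [Semiring A] [Algebra R A]
    {a b : A} (h : Commute a b) (p : R[X]) : Commute a (Polynomial.aeval b p) := by
  induction p using Polynomial.induction_on' with
  | add p q hp hq => rw [map_add]; exact hp.add_right hq
  | monomial n c =>
    rw [aeval_monomial]
    exact Commute.mul_right ((Algebra.commutes c a).symm) (h.pow_right n)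

private lemma sqrt_aux {R : Type*} [CommRing R] (h2 : IsUnit (2 : R)) {a : R} (ha : IsUnit a) :
    ∀ n : ℕ, ∀ z : R, (z ^ 2 - a) ^ n = 0 → ∃ w : R, w ^ 2 = a := by
  intro n
  induction n with
  | zero =>
    intro z hz
    have h10 : (1 : R) = 0 := by simpa using hz
    have : Subsingleton R := subsingleton_of_zero_eq_one h10.symm
    exact ⟨1, Subsingleton.elim _ _⟩
  | succ n ih =>
    intro z hz
    rcases Nat.eq_zero_or_pos n with rfl | hn
    · exact ⟨z, by rwa [pow_one, sub_eq_zero] at hz⟩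
    have hnil : IsNilpotent (z ^ 2 - a) := ⟨n + 1, hz⟩
    have hz2 : IsUnit (z ^ 2) := by
      have := hnil.isUnit_add_right_of_commute ha (Commute.all _ _)
      simpa using this
    have hzu : IsUnit z := by
      rw [sq] at hz2
      exact isUnit_of_mul_isUnit_left hz2
    obtain ⟨v, hv⟩ := hzu.exists_right_inv
    obtain ⟨u2, hu2⟩ := h2.exists_right_inv
    set z' := (z + a * v) * u2 with hz'
    have key : z' ^ 2 - a = (z ^ 2 - a) ^ 2 * (v ^ 2 * u2 ^ 2) := by
      rw [hz']
      linear_combination (a * (2 * u2 + 1)) * hu2 +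
        (u2 ^ 2 * (4 * a + 2 * a * v * z - 2 * z ^ 2 - z ^ 2 * (z * v - 1))) * hv
    refine ih z' ?_
    rw [key, mul_pow, ← pow_mul]
    have h2n : 2 * n = (n + 1) + (n - 1) := by omega
    rw [h2n, pow_add, hz, zero_mul, zero_mul]

theorem exists_involution_in_odd_part {F : Type*} [Field F] [IsAlgClosed F] (h2 : (2 : F) ≠ 0)
    {A : Type*} [Ring A] [Algebra F A] [FiniteDimensional F A] (y : Aˣ) :
    ∃ p : Polynomial F, ((y : A) * Polynomial.aeval ((y : A) ^ 2) p) ^ 2 = 1 := by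
  rcases subsingleton_or_nontrivial A with hA | hA
  · exact ⟨0, Subsingleton.elim _ _⟩
  classical
  set x : A := (y : A) ^ 2 with hx
  have hxu : IsUnit x := y.isUnit.pow 2
  have hint : IsIntegral F x := IsIntegral.of_finite F x
  set m : F[X] := minpoly F x with hm
  have hmonic : m.Monic := minpoly.monic hint
  have hm0 : m ≠ 0 := hmonic.ne_zero
  have hdeg : 0 < m.natDegree := minpoly.natDegree_pos hint
  -- the constant coefficient of m is nonzero
  have hc0 : m.coeff 0 ≠ 0 := by
    intro h
    obtain ⟨g, hg⟩ := X_dvd_iff.mpr h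
    have haev : (Polynomial.aeval x) m = 0 := minpoly.aeval F x
    rw [hg, map_mul, aeval_X] at haev
    obtain ⟨xi, hxi⟩ := hxu.exists_left_inv
    have hgx : Polynomial.aeval x g = 0 := by
      have := congrArg (xi * ·) haev
      simpa [← mul_assoc, hxi] using this
    have hdvd : m ∣ g := minpoly.dvd F x hgx
    have hgne : g ≠ 0 := by
      rintro rfl
      exact hm0 (by simpa using hg)
    have h1 := Polynomial.natDegree_le_of_dvd hdvd hgne
    have h2' : m.natDegree = g.natDegree + 1 := by
      rw [hg, natDegree_mul X_ne_zero hgne, natDegree_X, add_comm]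
    omega
  -- quotient ring
  set I : Ideal F[X] := Ideal.span {m} with hI
  let mk : F[X] →+* (F[X] ⧸ I) := Ideal.Quotient.mk I
  have hmkm : mk m = 0 := Ideal.Quotient.eq_zero_iff_mem.mpr (Ideal.subset_span rfl)
  -- mk X is a unit
  have hCinv : C (m.coeff 0)⁻¹ * C (m.coeff 0) = 1 := by
    rw [← C_mul, inv_mul_cancel₀ hc0, C_1]
  have hXs : X * (-C (m.coeff 0)⁻¹ * m.divX) = 1 - C (m.coeff 0)⁻¹ * m := by
    linear_combination (-C (m.coeff 0)⁻¹) * X_mul_divX_add m + hCinv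
  have hTu : IsUnit (mk X) := by
    refine IsUnit.of_mul_eq_one (mk (-C (m.coeff 0)⁻¹ * m.divX)) ?_
    rw [← map_mul, hXs, map_sub, map_one, map_mul, hmkm, mul_zero, sub_zero]
  -- 2 is a unit in the quotient
  have h2Q : IsUnit (2 : F[X] ⧸ I) := by
    have h2F : IsUnit (2 : F[X]) := by
      rw [show (2 : F[X]) = C 2 from (map_ofNat C 2).symm]
      exact isUnit_C.mpr h2.isUnit
    simpa [map_ofNat] using h2F.map mk
  -- roots and initial approximation
  have hsplits : m.Splits := IsAlgClosed.splits m
  have hprod : m = (m.roots.map fun a => X - C a).prod :=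
    hsplits.eq_prod_roots_of_monic hmonic
  set s : Finset F := m.roots.toFinset with hs
  have hsq : ∀ a : F, ∃ c : F, c ^ 2 = a := fun a => IsAlgClosed.exists_pow_nat_eq a zero_lt_two
  choose b hb using hsq
  set q0 : F[X] := Lagrange.interpolate s id b with hq0def
  have hq0 : ∀ a ∈ s, q0.eval a = b a := by
    intro a ha
    simpa [hq0def] using Lagrange.eval_interpolate_at_node b (Set.injOn_id _) ha
  have hdvd1 : (∏ a ∈ s, (X - C a)) ∣ q0 ^ 2 - X := by
    refine Finset.prod_dvd_of_coprime (fun a _ c _ hac => ?_) (fun a ha => ?_)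
    · exact pairwise_coprime_X_sub_C Function.injective_id hac
    · rw [dvd_iff_isRoot]
      simp [IsRoot, hq0 a ha, hb a]
  have hdvd2 : m ∣ (∏ a ∈ s, (X - C a)) ^ m.natDegree := by
    have hme : m = ∏ a ∈ s, (X - C a) ^ rootMultiplicity a m := by
      conv_lhs => rw [hprod]
      exact prod_multiset_root_eq_finset_root
    have hNle : ∀ a : F, rootMultiplicity a m ≤ m.natDegree := by
      intro a
      calc rootMultiplicity a m = m.roots.count a := (count_roots m).symm
        _ ≤ Multiset.card m.roots := Multiset.count_le_card _ _
        _ ≤ m.natDegree := card_roots' m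
    have hstep : (∏ a ∈ s, (X - C a) ^ rootMultiplicity a m) ∣
        (∏ a ∈ s, (X - C a)) ^ m.natDegree := by
      rw [← Finset.prod_pow]
      exact Finset.prod_dvd_prod_of_dvd _ _ fun a _ => pow_dvd_pow _ (hNle a)
    exact dvd_trans (Eq.dvd hme) hstep
  have hnilpow : (mk q0 ^ 2 - mk X) ^ m.natDegree = 0 := by
    rw [← map_pow, ← map_sub, ← map_pow]
    refine Ideal.Quotient.eq_zero_iff_mem.mpr (Ideal.mem_span_singleton.mpr ?_)
    exact dvd_trans hdvd2 (pow_dvd_pow_of_dvd hdvd1 _)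
  obtain ⟨w, hw⟩ := sqrt_aux h2Q hTu m.natDegree (mk q0) hnilpow
  obtain ⟨sQ, hsQ⟩ := hTu.exists_right_inv
  have hz : mk X * (w * sQ) ^ 2 = 1 := by
    linear_combination (mk X * sQ ^ 2) * hw + (mk X * sQ + 1) * hsQ
  obtain ⟨p, hp⟩ := Ideal.Quotient.mk_surjective (w * sQ)
  -- lift to A
  have hI0 : ∀ g ∈ I, (Polynomial.aeval x : F[X] →ₐ[F] A) g = 0 := by
    intro g hg
    obtain ⟨c, rfl⟩ := Ideal.mem_span_singleton.mp hg
    rw [map_mul, minpoly.aeval, zero_mul]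
  let φ : (F[X] ⧸ I) →+* A :=
    Ideal.Quotient.lift I (Polynomial.aeval x : F[X] →ₐ[F] A).toRingHom hI0
  have hφ : ∀ g : F[X], φ (mk g) = Polynomial.aeval x g := fun g => rfl
  have hfinal : x * (Polynomial.aeval x p) ^ 2 = 1 := by
    have := congrArg φ hz
    rw [map_one, map_mul, map_pow, ← hp, hφ, hφ, aeval_X] at this
    exact this
  refine ⟨p, ?_⟩
  have hcomm : Commute (y : A) (Polynomial.aeval x p) :=
    commute_aeval_aux ((Commute.refl (y : A)).pow_right 2) p
  calc ((y : A) * Polynomial.aeval x p) ^ 2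
      = (y : A) ^ 2 * (Polynomial.aeval x p) ^ 2 := hcomm.mul_pow 2
    _ = 1 := hfinal
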